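/- arXiv:2206.04616 — 2 statements merged into one kernel-verified Lean document; each statement's English description precedes it below -/
import Mathlib

section
/- Let K be a commutative ring and C a K-linear category. Let Kar(C) be the Karoubi (idempotent) completion of C, whose objects are pairs (x, e) with x an object of C and e : x → x an idempotent endomorphism, and whose morphisms (x, e) → (y, e') are morphisms f : x → y in C with f = e' ∘ f ∘ e; Kar(C) inherits a K-linear structure. Then the canonical K-linear embedding G : C → Kar(C), x ↦ (x, id_x), induces an isomorphism HH₀(G) : HH₀(C) → HH₀(Kar(C)) of K-modules. -/
/-!
For a commutative ring `K` and a `K`-linear category `C`, the zeroth Hochschild homology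
(trace) is `HH₀(C) := (⨁ x : C, End x) / span_K { f∘g - g∘f }`. Any `K`-linear functor
induces a map on `HH₀` sending `[f]` to `[F(f)]`.

STATEMENT: the canonical embedding `G : C ⥤ Kar(C)` of `C` into its Karoubi (idempotent)
completion induces an isomorphism `HH₀(G) : HH₀(C) → HH₀(Kar(C))` of `K`-modules.
(The Karoubi completion, whose objects are pairs `(x, e)` of an object with an idempotent
endomorphism, is `CategoryTheory.Idempotents.Karoubi` in Mathlib; it inherits a `K`-linear
structure, which we record as an instance below.)
-/

open CategoryTheory CategoryTheory.Idempotents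
open scoped DirectSum Classical

section KaroubiLinear

variable (K : Type*) [CommRing K] (C : Type*) [Category C] [Preadditive C] [Linear K C]

noncomputable instance karoubiHomSMul {P Q : Karoubi C} : SMul K (P ⟶ Q) where
  smul r f := ⟨r • f.f, by
    rw [Linear.smul_comp, Linear.comp_smul, f.comm]⟩

noncomputable instance karoubiHomModule {P Q : Karoubi C} : Module K (P ⟶ Q) :=
  Function.Injective.module K (Karoubi.inclusionHom P Q)
    (fun _ _ h => Karoubi.Hom.ext h) (fun _ _ => rfl)

/-- The `K`-linear structure on the Karoubi completion of a `K`-linear category. -/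
noncomputable instance karoubiLinear : Linear K (Karoubi C) where
  homModule _ _ := inferInstance
  smul_comp P Q R r f g := by
    apply Karoubi.hom_ext
    exact Linear.smul_comp _ _ _ r f.f g.f
  comp_smul P Q R f r g := by
    apply Karoubi.hom_ext
    exact Linear.comp_smul _ _ _ f.f r g.f

end KaroubiLinear

/-- The set of commutators `f∘g - g∘f` (for `f : x ⟶ y`, `g : y ⟶ x`) inside `⨁ x : C, End x`. -/
noncomputable def hhCommutators (K : Type*) [CommRing K] (C : Type*) [Category C]
    [Preadditive C] [Linear K C] : Set (⨁ x : C, (x ⟶ x)) :=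
  { v | ∃ (x y : C) (f : x ⟶ y) (g : y ⟶ x),
      v = DirectSum.of (fun z : C => z ⟶ z) y (g ≫ f)
        - DirectSum.of (fun z : C => z ⟶ z) x (f ≫ g) }

/-- The zeroth Hochschild homology (trace) of a `K`-linear category. -/
noncomputable abbrev HH0 (K : Type*) [CommRing K] (C : Type*) [Category C]
    [Preadditive C] [Linear K C] :=
  (⨁ x : C, (x ⟶ x)) ⧸ Submodule.span K (hhCommutators K C)

/-- The class `[f] ∈ HH₀(C)` of an endomorphism `f : x ⟶ x`. -/
noncomputable def HH0.cls (K : Type*) [CommRing K] {C : Type*} [Category C]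
    [Preadditive C] [Linear K C] {x : C} (f : x ⟶ x) : HH0 K C :=
  Submodule.Quotient.mk (DirectSum.of (fun z : C => z ⟶ z) x f)

section Proof

variable (K : Type*) [CommRing K] {C : Type*} [Category C] [Preadditive C] [Linear K C]

theorem HH0.cls_add {x : C} (f g : x ⟶ x) :
    HH0.cls K (f + g) = HH0.cls K f + HH0.cls K g := by
  unfold HH0.cls
  rw [(DirectSum.of (fun z : C => z ⟶ z) x).map_add, Submodule.Quotient.mk_add]

theorem HH0.cls_smul {x : C} (r : K) (f : x ⟶ x) :
    HH0.cls K (r • f) = r • HH0.cls K f := by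
  unfold HH0.cls
  rw [← DirectSum.lof_eq_of K, LinearMap.map_smul, DirectSum.lof_eq_of,
    Submodule.Quotient.mk_smul]

end Proof

section Proof2

variable (K : Type*) [CommRing K] (C : Type*) [Category C] [Preadditive C] [Linear K C]

/-- The component linear map `End x → HH₀(Kar C)`. -/
noncomputable def phiComp (x : C) : (x ⟶ x) →ₗ[K] HH0 K (Karoubi C) where
  toFun f := HH0.cls K ((toKaroubi C).map f)
  map_add' f g := by
    rw [Functor.map_add, HH0.cls_add]
  map_smul' r f := by
    rw [show (toKaroubi C).map (r • f) = r • (toKaroubi C).map f from Karoubi.hom_ext _ _ rfl,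
      HH0.cls_smul, RingHom.id_apply]

/-- The component linear map `End P → HH₀(C)` for `P` in the Karoubi envelope. -/
noncomputable def psiComp (P : Karoubi C) : (P ⟶ P) →ₗ[K] HH0 K C where
  toFun f := HH0.cls K f.f
  map_add' f g := by
    show HH0.cls K (f.f + g.f) = _
    rw [HH0.cls_add]
  map_smul' r f := by
    show HH0.cls K (r • f.f) = _
    rw [HH0.cls_smul, RingHom.id_apply]

noncomputable def phiAux : (⨁ x : C, (x ⟶ x)) →ₗ[K] HH0 K (Karoubi C) :=
  DirectSum.toModule K C _ (phiComp K C)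

noncomputable def psiAux : (⨁ P : Karoubi C, (P ⟶ P)) →ₗ[K] HH0 K C :=
  DirectSum.toModule K (Karoubi C) _ (psiComp K C)

theorem phiAux_of (x : C) (f : x ⟶ x) :
    phiAux K C (DirectSum.of (fun z : C => z ⟶ z) x f) = HH0.cls K ((toKaroubi C).map f) :=
  DirectSum.toModule_lof (M := fun z : C => z ⟶ z) (φ := phiComp K C) K x f

theorem psiAux_of (P : Karoubi C) (f : P ⟶ P) :
    psiAux K C (DirectSum.of (fun Q : Karoubi C => Q ⟶ Q) P f) = HH0.cls K f.f :=
  DirectSum.toModule_lof (M := fun Q : Karoubi C => Q ⟶ Q) (φ := psiComp K C) K P f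

theorem phiAux_span :
    Submodule.span K (hhCommutators K C) ≤ LinearMap.ker (phiAux K C) := by
  rw [Submodule.span_le]
  rintro v ⟨x, y, f, g, rfl⟩
  simp only [SetLike.mem_coe, LinearMap.mem_ker, map_sub, phiAux_of]
  rw [sub_eq_zero]
  unfold HH0.cls
  rw [Submodule.Quotient.eq]
  apply Submodule.subset_span
  exact ⟨(toKaroubi C).obj x, (toKaroubi C).obj y, (toKaroubi C).map f, (toKaroubi C).map g,
    by rw [← (toKaroubi C).map_comp, ← (toKaroubi C).map_comp]⟩

theorem psiAux_span :
    Submodule.span K (hhCommutators K (Karoubi C)) ≤ LinearMap.ker (psiAux K C) := by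
  rw [Submodule.span_le]
  rintro v ⟨P, Q, f, g, rfl⟩
  simp only [SetLike.mem_coe, LinearMap.mem_ker, map_sub, psiAux_of]
  rw [sub_eq_zero]
  unfold HH0.cls
  rw [Submodule.Quotient.eq]
  apply Submodule.subset_span
  exact ⟨P.X, Q.X, f.f, g.f, rfl⟩

end Proof2

theorem hh0_karoubi_iso (K : Type*) [CommRing K]
    (C : Type*) [Category C] [Preadditive C] [Linear K C] :
    ∃ φ : HH0 K C →ₗ[K] HH0 K (Karoubi C),
      (∀ (x : C) (f : x ⟶ x), φ (HH0.cls K f) = HH0.cls K ((toKaroubi C).map f)) ∧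
        Function.Bijective φ := by
  set φ := Submodule.liftQ _ (phiAux K C) (phiAux_span K C) with hφ
  set ψ := Submodule.liftQ _ (psiAux K C) (psiAux_span K C) with hψ
  have hφcls : ∀ (x : C) (f : x ⟶ x), φ (HH0.cls K f) = HH0.cls K ((toKaroubi C).map f) :=
    fun x f => phiAux_of K C x f
  have hψcls : ∀ (P : Karoubi C) (f : P ⟶ P), ψ (HH0.cls K f) = HH0.cls K f.f :=
    fun P f => psiAux_of K C P f
  refine ⟨φ, hφcls, ?_⟩
  have h1 : ∀ a, ψ (φ a) = a := by
    intro a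
    induction a using Submodule.Quotient.induction_on with
    | _ v =>
      induction v using DirectSum.induction_on with
      | zero => simp
      | of x f =>
        change ψ (φ (HH0.cls K f)) = HH0.cls K f
        rw [hφcls, hψcls]
        rfl
      | add v w hv hw =>
        rw [Submodule.Quotient.mk_add, map_add, map_add, hv, hw]
  have h2 : ∀ b, φ (ψ b) = b := by
    intro b
    induction b using Submodule.Quotient.induction_on with
    | _ v =>
      induction v using DirectSum.induction_on with
      | zero => simp
      | of P f =>
        change φ (ψ (HH0.cls K f)) = HH0.cls K f
        rw [hψcls, hφcls]
        -- [toKaroubi (f.f)] = [f] in HH₀(Kar C)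
        have hfp : f.f ≫ P.p = f.f := by
          conv_lhs => rw [← f.comm]
          simp [P.idem]
        have hpf : P.p ≫ f.f = f.f := by
          conv_lhs => rw [← f.comm]
          simp [P.idem, ← Category.assoc]
        set a : P ⟶ (toKaroubi C).obj P.X := ⟨P.p, by simp [P.idem]⟩ with ha
        set b' : (toKaroubi C).obj P.X ⟶ P := ⟨f.f, by simp [hfp]⟩ with hb'
        have h3 : b' ≫ a = (toKaroubi C).map f.f := Karoubi.hom_ext _ _ (by simp [ha, hb', hfp])
        have h4 : a ≫ b' = f := Karoubi.hom_ext _ _ (by simp [ha, hb', hpf])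
        unfold HH0.cls
        rw [Submodule.Quotient.eq]
        apply Submodule.subset_span
        exact ⟨P, (toKaroubi C).obj P.X, a, b', by rw [h3, h4]⟩
      | add v w hv hw =>
        rw [Submodule.Quotient.mk_add, map_add, map_add, hv, hw]
  exact Function.bijective_iff_has_inverse.mpr ⟨ψ, h1, h2⟩
end

section
/- Let K be a commutative ring and C a K-linear category. Let C⊕ denote the additive (matrix) completion of C, whose objects are finite tuples (x₁, …, x_n) of objects of C and whose morphisms are matrices of morphisms of C, with composition given by matrix multiplication; C⊕ inherits a K-linear structure. Then the canonical K-linear embedding F : C → C⊕, sending an object x to the one-entry tuple (x), induces an isomorphism HH₀(F) : HH₀(C) → HH₀(C⊕) of K-modules. -/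
/-!
For a commutative ring `K` and a `K`-linear category `C`, the zeroth Hochschild homology
(trace) is `HH₀(C) := (⨁ x : C, End x) / span_K { f∘g - g∘f }`. Any `K`-linear functor
induces a map on `HH₀` sending `[f]` to `[F(f)]`.

STATEMENT: the canonical embedding `F : C ⥤ C⊕` of `C` into its additive (matrix)
completion — whose objects are finite tuples of objects of `C` and whose morphisms are
matrices of morphisms, composed by matrix multiplication — induces an isomorphism
`HH₀(F) : HH₀(C) → HH₀(C⊕)` of `K`-modules.  (The matrix completion is
`CategoryTheory.Mat_` in Mathlib, with embedding `Mat_.embedding`; it inherits a `K`-linear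
structure, which we record as an instance below.)
-/

open CategoryTheory
open scoped DirectSum Classical

section MatLinear

variable (K : Type*) [CommRing K] (C : Type u) [Category.{v} C] [Preadditive C] [Linear K C]

noncomputable instance matHomModule {M N : Mat_ C} : Module K (M ⟶ N) :=
  inferInstanceAs (Module K (∀ (i : M.ι) (j : N.ι), M.X i ⟶ N.X j))

/-- The `K`-linear structure on the matrix (additive) completion of a `K`-linear category. -/
noncomputable instance matLinear : Linear K (Mat_ C) where
  homModule _ _ := inferInstance
  smul_comp M N P r f g := by
    apply Mat_.hom_ext
    intro i k
    show ∑ j : N.ι, (r • f i j) ≫ g j k = r • ∑ j : N.ι, f i j ≫ g j k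
    rw [Finset.smul_sum]
    exact Finset.sum_congr rfl fun j _ => Linear.smul_comp _ _ _ r (f i j) (g j k)
  comp_smul M N P f r g := by
    apply Mat_.hom_ext
    intro i k
    show ∑ j : N.ι, f i j ≫ (r • g j k) = r • ∑ j : N.ι, f i j ≫ g j k
    rw [Finset.smul_sum]
    exact Finset.sum_congr rfl fun j _ => Linear.comp_smul _ _ _ (f i j) r (g j k)

end MatLinear

section Aux

variable (K : Type*) [CommRing K] {C' : Type*} [Category C'] [Preadditive C'] [Linear K C']

/-- `[f]` as a linear map in `f`. -/
noncomputable def clsHom (x : C') : (x ⟶ x) →ₗ[K] HH0 K C' :=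
  (Submodule.mkQ _).comp (DirectSum.lof K C' (fun z : C' => z ⟶ z) x)

theorem clsHom_apply (x : C') (f : x ⟶ x) : clsHom K x f = HH0.cls K f := by
  simp [clsHom, HH0.cls, DirectSum.lof_eq_of]

theorem cls_comp {x y : C'} (f : x ⟶ y) (g : y ⟶ x) :
    HH0.cls K (g ≫ f) = HH0.cls K (f ≫ g) := by
  rw [HH0.cls, HH0.cls, Submodule.Quotient.eq]
  exact Submodule.subset_span ⟨x, y, f, g, rfl⟩

theorem cls_sum {x : C'} {ι : Type*} (s : Finset ι) (f : ι → (x ⟶ x)) :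
    HH0.cls K (∑ i ∈ s, f i) = ∑ i ∈ s, HH0.cls K (f i) := by
  simp_rw [← clsHom_apply]; exact map_sum _ _ _

end Aux

section Aux2

variable (K : Type*) [CommRing K] (C : Type u) [Category.{v} C] [Preadditive C] [Linear K C]

@[simp]
theorem mat_smul_apply {M N : Mat_ C} (r : K) (f : M ⟶ N) (i : M.ι) (j : N.ι) :
    (r • f) i j = r • f i j := rfl

/-- The embedding functor's action on endomorphisms, as a linear map. -/
noncomputable def embLin (x : C) :
    (x ⟶ x) →ₗ[K] ((Mat_.embedding C).obj x ⟶ (Mat_.embedding C).obj x) where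
  toFun := (Mat_.embedding C).map
  map_add' _ _ := rfl
  map_smul' _ _ := rfl

/-- The forward map on direct sums. -/
noncomputable def phi0 : (⨁ x : C, (x ⟶ x)) →ₗ[K] HH0 K (Mat_ C) :=
  DirectSum.toModule K C _ fun x =>
    (clsHom K ((Mat_.embedding C).obj x)).comp (embLin K C x)

theorem phi0_of (x : C) (f : x ⟶ x) :
    phi0 K C (DirectSum.of (fun z : C => z ⟶ z) x f)
      = HH0.cls K ((Mat_.embedding C).map f) := by
  rw [phi0, ← DirectSum.lof_eq_of K, DirectSum.toModule_lof K (M := fun z : C => z ⟶ z) x f]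
  exact clsHom_apply K _ _

/-- The trace of a matrix endomorphism, as a linear map to `HH0 K C`. -/
noncomputable def trLin (M : Mat_ C) : (M ⟶ M) →ₗ[K] HH0 K C where
  toFun A := ∑ i : M.ι, HH0.cls K (A i i)
  map_add' A B := by
    simp_rw [← clsHom_apply, Mat_.add_apply, map_add, Finset.sum_add_distrib]
  map_smul' r A := by
    simp_rw [← clsHom_apply, mat_smul_apply, map_smul, Finset.smul_sum, RingHom.id_apply]

/-- The backward map on direct sums. -/
noncomputable def psi0 : (⨁ M : Mat_ C, (M ⟶ M)) →ₗ[K] HH0 K C :=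
  DirectSum.toModule K (Mat_ C) _ (trLin K C)

theorem psi0_of (M : Mat_ C) (A : M ⟶ M) :
    psi0 K C (DirectSum.of (fun N : Mat_ C => N ⟶ N) M A)
      = ∑ i : M.ι, HH0.cls K (A i i) := by
  rw [psi0, ← DirectSum.lof_eq_of K, DirectSum.toModule_lof K (M := fun N : Mat_ C => N ⟶ N) M A]
  rfl

/-- The row inclusion `emb (M.X i) ⟶ M`. -/
noncomputable def rowIncl (M : Mat_ C) (i : M.ι) : (Mat_.embedding C).obj (M.X i) ⟶ M :=
  fun _ j => (𝟙 M : Mat_.Hom M M) i j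

/-- The column projection `M ⟶ emb (M.X i)`. -/
noncomputable def colProj (M : Mat_ C) (i : M.ι) : M ⟶ (Mat_.embedding C).obj (M.X i) :=
  fun j _ => (𝟙 M : Mat_.Hom M M) j i

theorem sum_colProj_rowIncl (M : Mat_ C) :
    ∑ i : M.ι, colProj C M i ≫ rowIncl C M i = 𝟙 M := by
  apply Mat_.hom_ext
  intro j k
  have : ∀ i : M.ι, (colProj C M i ≫ rowIncl C M i) j k
      = (𝟙 M : Mat_.Hom M M) j i ≫ (𝟙 M : Mat_.Hom M M) i k := by
    intro i
    simp [colProj, rowIncl, Mat_.comp_apply]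
    exact Fintype.sum_subsingleton _ PUnit.unit
  have hsum : (∑ i : M.ι, colProj C M i ≫ rowIncl C M i) j k
      = ∑ i : M.ι, (𝟙 M : Mat_.Hom M M) j i ≫ (𝟙 M : Mat_.Hom M M) i k := by
    rw [show ∀ (F : M.ι → (M ⟶ M)), (∑ i : M.ι, F i) j k = ∑ i : M.ι, F i j k from
      fun F => map_sum (AddMonoidHom.mk' (fun f : M ⟶ M => f j k) (fun _ _ => rfl)) F Finset.univ]
    exact Finset.sum_congr rfl fun i _ => this i
  rw [hsum]
  have := Category.id_comp (𝟙 M)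
  calc ∑ i : M.ι, (𝟙 M : Mat_.Hom M M) j i ≫ (𝟙 M : Mat_.Hom M M) i k
      = (𝟙 M ≫ 𝟙 M : Mat_.Hom M M) j k := by rw [Mat_.comp_apply]
    _ = (𝟙 M : Mat_.Hom M M) j k := by rw [Category.id_comp]

theorem rowIncl_comp_colProj (M : Mat_ C) (A : M ⟶ M) (i : M.ι) :
    rowIncl C M i ≫ A ≫ colProj C M i = (Mat_.embedding C).map (A i i) := by
  apply Mat_.hom_ext
  intro p q
  have : (rowIncl C M i ≫ A ≫ colProj C M i) p q
      = ∑ j : M.ι, (𝟙 M : Mat_.Hom M M) i j ≫ (∑ k : M.ι, A j k ≫ (𝟙 M : Mat_.Hom M M) k i) := by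
    simp [rowIncl, colProj, Mat_.comp_apply]
    rfl
  rw [this]
  have h1 : ∀ j : M.ι, (∑ k : M.ι, A j k ≫ (𝟙 M : Mat_.Hom M M) k i) = (A ≫ 𝟙 M) j i := by
    intro j; rw [Mat_.comp_apply]
  simp_rw [h1]
  have h2 : (∑ j : M.ι, (𝟙 M : Mat_.Hom M M) i j ≫ (A ≫ 𝟙 M) j i)
      = (𝟙 M ≫ (A ≫ 𝟙 M)) i i := by rw [Mat_.comp_apply]
  rw [h2, Category.id_comp, Category.comp_id]
  rfl

/-- The key trace identity: `[A] = ∑ i, [emb (A i i)]` in `HH0 K (Mat_ C)`. -/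
theorem cls_eq_sum_diag (M : Mat_ C) (A : M ⟶ M) :
    HH0.cls K A = ∑ i : M.ι, HH0.cls K ((Mat_.embedding C).map (A i i)) := by
  have h0 : A = ∑ i : M.ι, (A ≫ colProj C M i) ≫ rowIncl C M i := by
    simp_rw [Category.assoc]
    rw [← Preadditive.comp_sum, sum_colProj_rowIncl, Category.comp_id]
  rw [congrArg (HH0.cls K) h0, cls_sum]
  exact Finset.sum_congr rfl fun i _ => by
    rw [cls_comp, rowIncl_comp_colProj]

end Aux2

theorem hh0_matrix_completion_iso (K : Type*) [CommRing K]
    (C : Type u) [Category.{v} C] [Preadditive C] [Linear K C] :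
    ∃ φ : HH0 K C →ₗ[K] HH0 K (Mat_ C),
      (∀ (x : C) (f : x ⟶ x), φ (HH0.cls K f) = HH0.cls K ((Mat_.embedding C).map f)) ∧
        Function.Bijective φ := by
  -- φ : HH0 K C → HH0 K (Mat_ C)
  have hphi : Submodule.span K (hhCommutators K C) ≤ LinearMap.ker (phi0 K C) := by
    rw [Submodule.span_le]
    rintro v ⟨x, y, f, g, rfl⟩
    simp only [SetLike.mem_coe, LinearMap.mem_ker, map_sub, phi0_of]
    rw [Functor.map_comp, Functor.map_comp, cls_comp, sub_self]
  refine ⟨Submodule.liftQ _ (phi0 K C) hphi, fun x f => ?_, ?_⟩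
  · exact (Submodule.liftQ_apply _ _ _).trans (phi0_of K C x f)
  -- ψ : HH0 K (Mat_ C) → HH0 K C
  have hpsi : Submodule.span K (hhCommutators K (Mat_ C)) ≤ LinearMap.ker (psi0 K C) := by
    rw [Submodule.span_le]
    rintro v ⟨M, N, f, g, rfl⟩
    simp only [SetLike.mem_coe, LinearMap.mem_ker, map_sub, psi0_of]
    rw [sub_eq_zero]
    have h1 : ∀ j : N.ι, HH0.cls K ((g ≫ f) j j)
        = ∑ i : M.ι, HH0.cls K (g j i ≫ f i j) := by
      intro j; rw [Mat_.comp_apply, cls_sum]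
    have h2 : ∀ i : M.ι, HH0.cls K ((f ≫ g) i i)
        = ∑ j : N.ι, HH0.cls K (f i j ≫ g j i) := by
      intro i; rw [Mat_.comp_apply, cls_sum]
    simp_rw [h1, h2]
    rw [Finset.sum_comm]
    exact Finset.sum_congr rfl fun i _ => Finset.sum_congr rfl fun j _ => cls_comp K _ _
  set φ := Submodule.liftQ _ (phi0 K C) hphi with hφ
  set ψ := Submodule.liftQ _ (psi0 K C) hpsi with hψ
  have hφcls : ∀ (x : C) (f : x ⟶ x), φ (HH0.cls K f) = HH0.cls K ((Mat_.embedding C).map f) :=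
    fun x f => (Submodule.liftQ_apply _ _ _).trans (phi0_of K C x f)
  have hψcls : ∀ (M : Mat_ C) (A : M ⟶ M), ψ (HH0.cls K A) = ∑ i : M.ι, HH0.cls K (A i i) :=
    fun M A => (Submodule.liftQ_apply _ _ _).trans (psi0_of K C M A)
  -- ψ ∘ φ = id
  have hleft : ψ.comp φ = LinearMap.id := by
    apply Submodule.linearMap_qext
    ext x f
    simp only [LinearMap.comp_apply, Submodule.mkQ_apply, LinearMap.id_apply]
    have : (Submodule.Quotient.mk (DirectSum.lof K C (fun z : C => z ⟶ z) x f) : HH0 K C)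
        = HH0.cls K f := by rw [DirectSum.lof_eq_of]; rfl
    rw [this, hφcls, hψcls]
    simp only [Mat_.embedding]
    exact Fintype.sum_subsingleton _ PUnit.unit
  -- φ ∘ ψ = id
  have hright : φ.comp ψ = LinearMap.id := by
    apply Submodule.linearMap_qext
    ext M A
    simp only [LinearMap.comp_apply, Submodule.mkQ_apply, LinearMap.id_apply]
    have : (Submodule.Quotient.mk (DirectSum.lof K (Mat_ C) (fun N : Mat_ C => N ⟶ N) M A)
        : HH0 K (Mat_ C)) = HH0.cls K A := by rw [DirectSum.lof_eq_of]; rfl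
    rw [this, hψcls, map_sum]
    simp_rw [hφcls]
    exact (cls_eq_sum_diag K C M A).symm
  constructor
  · intro a b hab
    have := congrArg ψ hab
    rw [← LinearMap.comp_apply, ← LinearMap.comp_apply, hleft] at this
    simpa using this
  · intro b
    refine ⟨ψ b, ?_⟩
    rw [← LinearMap.comp_apply, hright]; rfl
end
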